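/- Let the discrete convolution kernels A^{(n)}_{n−k} (1 ≤ k ≤ n ≤ N) be positive and monotone, i.e. A^{(n)}_{n−k} > 0 and A^{(n)}_{n−k−1} ≥ A^{(n)}_{n−k} for 1 ≤ k ≤ n − 1. Define the complementary kernels by p^{(n)}_0 := 1/A^{(n)}_0 and p^{(n)}_{n−j} := (1/A^{(j)}_0) Σ_{k=j+1}^{n} (A^{(k)}_{k−j−1} − A^{(k)}_{k−j}) p^{(n)}_{n−k} for 1 ≤ j ≤ n − 1. Then p^{(n)}_{n−j} ≥ 0 for all 1 ≤ j ≤ n ≤ N, and the orthogonality identity Σ_{j=k}^{n} p^{(n)}_{n−j} A^{(j)}_{j−k} = 1 holds for all 1 ≤ k ≤ n ≤ N. -/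

import Mathlib

/-!
STATEMENT 11: nonnegativity of the discrete complementary convolution kernels
and the orthogonality identity.  Throughout, `A n k` denotes the kernel
`A^{(n)}_{n−k}` (the coefficient of the step `k`), so monotonicity
`A^{(n)}_{n−k−1} ≥ A^{(n)}_{n−k}` reads `A n (k+1) ≥ A n k`, and
`A^{(j)}_{j−k} = A j k`.
-/

/-- The discrete complementary convolution kernels `p^{(n)}_m` associated with
a family of kernels.  Here `A n k` denotes the kernel `A^{(n)}_{n−k}`
(the coefficient of the step `k` in `Σ_{k=1}^n A^{(n)}_{n−k} ∇v^k`), and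
`compP A n m = p^{(n)}_m`, defined by `p^{(n)}_0 := 1/A^{(n)}_0` and, for
`j = n − (m+1)`,
`p^{(n)}_{n−j} := (1/A^{(j)}_0) Σ_{k=j+1}^n (A^{(k)}_{k−j−1} − A^{(k)}_{k−j}) p^{(n)}_{n−k}`;
note `A^{(j)}_0 = A j j`, `A^{(k)}_{k−j} = A k j` and `A^{(k)}_{k−j−1} = A k (j+1)`. -/
noncomputable def compP (A : ℕ → ℕ → ℝ) (n : ℕ) : ℕ → ℝ
  | 0 => 1 / A n n
  | (m + 1) =>
      (1 / A (n - (m + 1)) (n - (m + 1))) *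
        ∑ k ∈ (Finset.Icc (n - (m + 1) + 1) n).attach,
          (A k.1 (n - (m + 1) + 1) - A k.1 (n - (m + 1))) * compP A n (n - k.1)
  decreasing_by
    have hk := Finset.mem_Icc.mp k.2
    omega

lemma compP_succ (A : ℕ → ℕ → ℝ) (n m : ℕ) :
    compP A n (m + 1) = (1 / A (n - (m + 1)) (n - (m + 1))) *
      ∑ k ∈ Finset.Icc (n - (m + 1) + 1) n,
        (A k (n - (m + 1) + 1) - A k (n - (m + 1))) * compP A n (n - k) := by
  rw [compP, ← Finset.sum_attach (Finset.Icc (n - (m + 1) + 1) n)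
    (fun k => (A k (n - (m + 1) + 1) - A k (n - (m + 1))) * compP A n (n - k))]

lemma compP_zero (A : ℕ → ℕ → ℝ) (n : ℕ) : compP A n 0 = 1 / A n n := by
  rw [compP]

theorem complementary_kernels_nonneg_and_orthogonal
    (N : ℕ) (hN : 1 ≤ N) (A : ℕ → ℕ → ℝ)
    -- positivity: `A^{(n)}_{n−k} > 0` for `1 ≤ k ≤ n ≤ N`
    (hApos : ∀ n k, 1 ≤ k → k ≤ n → n ≤ N → 0 < A n k)
    -- monotonicity: `A^{(n)}_{n−k−1} ≥ A^{(n)}_{n−k}` for `1 ≤ k ≤ n − 1`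
    (hAmono : ∀ n k, 1 ≤ k → k + 1 ≤ n → n ≤ N → A n k ≤ A n (k + 1)) :
    -- `p^{(n)}_{n−j} ≥ 0` for `1 ≤ j ≤ n ≤ N`
    (∀ n j, 1 ≤ j → j ≤ n → n ≤ N → 0 ≤ compP A n (n - j)) ∧
    -- orthogonality: `Σ_{j=k}^n p^{(n)}_{n−j} A^{(j)}_{j−k} = 1` for `1 ≤ k ≤ n ≤ N`
    (∀ n k, 1 ≤ k → k ≤ n → n ≤ N →
      ∑ j ∈ Finset.Icc k n, compP A n (n - j) * A j k = 1) := by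
  have nonneg : ∀ n, n ≤ N → ∀ d j, n - j = d → 1 ≤ j → j ≤ n →
      0 ≤ compP A n (n - j) := by
    intro n hnN d
    induction d using Nat.strong_induction_on with
    | _ d ih =>
      intro j hd hj hjn
      rcases eq_or_lt_of_le hjn with h | h
      · subst h
        simp only [Nat.sub_self, compP_zero]
        have := hApos j j hj le_rfl hnN
        positivity
      · obtain ⟨m, hm⟩ : ∃ m, n - j = m + 1 := ⟨n - j - 1, by omega⟩
        rw [hm, compP_succ]
        have hj' : n - (m + 1) = j := by omega
        rw [hj']
        apply mul_nonneg
        · have := hApos j j hj le_rfl (by omega)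
          positivity
        · apply Finset.sum_nonneg
          intro k hk
          have hk' := Finset.mem_Icc.mp hk
          apply mul_nonneg
          · have := hAmono k j hj (by omega) (by omega)
            linarith
          · exact ih (n - k) (by omega) k rfl (by omega) (by omega)
  have orth : ∀ n, n ≤ N → ∀ d k, n - k = d → 1 ≤ k → k ≤ n →
      ∑ j ∈ Finset.Icc k n, compP A n (n - j) * A j k = 1 := by
    intro n hnN d
    induction d using Nat.strong_induction_on with
    | _ d ih =>
      intro k hd hk hkn
      rcases eq_or_lt_of_le hkn with h | h
      · subst h
        rw [Finset.Icc_self, Finset.sum_singleton, Nat.sub_self, compP_zero,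
          one_div_mul_cancel (hApos k k hk le_rfl hnN).ne']
      · obtain ⟨m, hm⟩ : ∃ m, n - k = m + 1 := ⟨n - k - 1, by omega⟩
        have hsplit : Finset.Icc k n = insert k (Finset.Icc (k + 1) n) := by
          ext x; simp only [Finset.mem_Icc, Finset.mem_insert]; omega
        have hknot : k ∉ Finset.Icc (k + 1) n := by
          simp only [Finset.mem_Icc]; omega
        rw [hsplit, Finset.sum_insert hknot, hm, compP_succ]
        have hk' : n - (m + 1) = k := by omega
        rw [hk']
        have ha : A k k ≠ 0 := (hApos k k hk le_rfl (by omega)).ne'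
        rw [mul_comm (1 / A k k), mul_assoc, one_div_mul_cancel ha, mul_one,
          ← Finset.sum_add_distrib]
        have : ∀ j ∈ Finset.Icc (k + 1) n,
            (A j (k + 1) - A j k) * compP A n (n - j) + compP A n (n - j) * A j k
              = compP A n (n - j) * A j (k + 1) := by
          intro j _; ring
        rw [Finset.sum_congr rfl this]
        exact ih m (by omega) (k + 1) (by omega) (by omega) (by omega)
  exact ⟨fun n j h1 h2 h3 => nonneg n h3 (n - j) j rfl h1 h2,
    fun n k h1 h2 h3 => orth n h3 (n - k) k rfl h1 h2⟩
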